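/- Let I ⊂ R be an ideal generated by bihomogeneous forms of bidegree ≤ (r,r'), and assume that I is (p,p')-regular and that dim R/I = 0 (Krull dimension). Then for every e ≥ 1 the power I^e is (l,l')-regular for some (l,l') ≤ ((e−1)r + p, (e−1)r' + p'); in particular I^e is ((e−1)r + p, (e−1)r' + p')-regular. -/

import Mathlib

noncomputable section

open MvPolynomial Finset

/-- The saturation of a submodule `M ⊆ N` with respect to an ideal `J`:
`{x ∈ N : J^e • x ⊆ M for some e}`. -/
def satur {A : Type*} [CommRing A] {N : Type*} [AddCommGroup N] [Module A N]
    (J : Ideal A) (M : Submodule A N) : Submodule A N where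
  carrier := {x | ∃ e : ℕ, ∀ r ∈ J ^ e, r • x ∈ M}
  add_mem' := by
    rintro a b ⟨e₁, h₁⟩ ⟨e₂, h₂⟩
    refine ⟨max e₁ e₂, fun r hr => ?_⟩
    rw [smul_add]
    exact M.add_mem (h₁ r (Ideal.pow_le_pow_right (le_max_left _ _) hr))
      (h₂ r (Ideal.pow_le_pow_right (le_max_right _ _) hr))
  zero_mem' := ⟨0, fun r _ => by simp⟩
  smul_mem' := by
    rintro c x ⟨e, h⟩
    refine ⟨e, fun r hr => ?_⟩
    rw [smul_comm]
    exact M.smul_mem c (h r hr)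

section Koszul

variable {A : Type*} [CommRing A] {N : Type*} [AddCommGroup N] [Module A N]
variable {γ : Type*} [Fintype γ] [LinearOrder γ]

/-- The Koszul differential of the Koszul cochain complex on the `t`-th powers of the
family `f`, with coefficients in `N`.  A `k`-cochain is recorded as a function on all finite
subsets of `γ`; only its values on subsets of cardinality `k` are relevant. -/
def kosD (f : γ → A) (t : ℕ) (φ : Finset γ → N) : Finset γ → N := fun S =>
  ∑ j ∈ S, ((-1 : ℤ) ^ (S.filter (fun i => i < j)).card) • ((f j ^ t) • φ (S.erase j))

/-- The transition map from the Koszul complex on `f^t` to the one on `f^t'` (`t ≤ t'`). -/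
def kosT (f : γ → A) (t t' : ℕ) (φ : Finset γ → N) : Finset γ → N := fun S =>
  (∏ j ∈ S, f j ^ (t' - t)) • φ S

/-- `φ` is a `k`-cochain of the `t`-th Koszul complex on `f`, with values in the submodule
`M`, which is bihomogeneous of bidegree `d` (relative to the bihomogeneity notion `hom` on
`N` and the bidegrees `wf` of the members of `f`). -/
def IsKCochain (hom : ℤ × ℤ → Set N) (M : Submodule A N) (f : γ → A) (wf : γ → ℤ × ℤ)
    (d : ℤ × ℤ) (t k : ℕ) (φ : Finset γ → N) : Prop :=
  ∀ S : Finset γ, S.card = k → φ S ∈ M ∧ φ S ∈ hom (d + t • ∑ j ∈ S, wf j)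

/-- The bidegree-`d` graded piece of the local cohomology module `H^i_𝔪(M)` (`𝔪 = ⟨f⟩`)
vanishes.  Local cohomology is the direct limit over `t` of the cohomology of the Koszul
complexes on the powers `f^t`; its bidegree-`d` piece vanishes iff every bidegree-`d`
cocycle eventually becomes a coboundary. -/
def LCVanish (hom : ℤ × ℤ → Set N) (M : Submodule A N) (f : γ → A) (wf : γ → ℤ × ℤ)
    (i : ℕ) (d : ℤ × ℤ) : Prop :=
  ∀ (t : ℕ) (φ : Finset γ → N), IsKCochain hom M f wf d t i φ →
    (∀ S : Finset γ, S.card = i + 1 → kosD f t φ S = 0) →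
    ∃ t' : ℕ, t ≤ t' ∧ ∃ ψ : Finset γ → N, IsKCochain hom M f wf d t' (i - 1) ψ ∧
      ∀ S : Finset γ, S.card = i → kosT f t t' φ S = kosD f t' ψ S

/-- The region `Reg_j(p,p') = {(x,y) ∈ ℤ² : x ≥ p−j, y ≥ p'−j, x+y ≥ p+p'−j−1}`. -/
def RegSet (j p p' : ℤ) : Set (ℤ × ℤ) :=
  {q | p - j ≤ q.1 ∧ p' - j ≤ q.2 ∧ p + p' - j - 1 ≤ q.1 + q.2}

/-- `M` is `(p,p')`-regular: `H^i_𝔪(M)_{k,k'} = 0` whenever `(k,k') ∈ Reg_{i−1}(p,p')`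
(Definition 3.1 of Hoffman–Wang). -/
def IsBiregular (hom : ℤ × ℤ → Set N) (M : Submodule A N) (f : γ → A) (wf : γ → ℤ × ℤ)
    (p p' : ℤ) : Prop :=
  ∀ i : ℕ, ∀ d ∈ RegSet ((i : ℤ) - 1) p p', LCVanish hom M f wf i d

end Koszul

/-- The bigrading on `K[x_0,…,x_m,y_0,…,y_n]`: `deg x_i = (1,0)`, `deg y_j = (0,1)`. -/
def pw (m n : ℕ) : Fin (m + 1) ⊕ Fin (n + 1) → ℤ × ℤ :=
  Sum.elim (fun _ => ((1 : ℤ), (0 : ℤ))) (fun _ => ((0 : ℤ), (1 : ℤ)))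

/-- The generators `x_i y_j` of the irrelevant ideal `𝔪 = ⟨x_0,…,x_m⟩ ∩ ⟨y_0,…,y_n⟩`. -/
def irrGen (K : Type*) [Field K] (m n : ℕ) :
    Fin ((m + 1) * (n + 1)) → MvPolynomial (Fin (m + 1) ⊕ Fin (n + 1)) K := fun k =>
  X (Sum.inl (finProdFinEquiv.symm k).1) * X (Sum.inr (finProdFinEquiv.symm k).2)

/-- The irrelevant ideal `𝔪`. -/
def irrIdeal (K : Type*) [Field K] (m n : ℕ) :
    Ideal (MvPolynomial (Fin (m + 1) ⊕ Fin (n + 1)) K) :=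
  Ideal.span (Set.range (irrGen K m n))

/-- The bidegrees of the generators of `𝔪` (each `x_i y_j` has bidegree `(1,1)`). -/
def irrW (m n : ℕ) : Fin ((m + 1) * (n + 1)) → ℤ × ℤ := fun _ => (1, 1)

/-- The set of bihomogeneous elements of bidegree `d` in `R`. -/
def homR (K : Type*) [Field K] (m n : ℕ) (d : ℤ × ℤ) :
    Set (MvPolynomial (Fin (m + 1) ⊕ Fin (n + 1)) K) :=
  {f | f.IsWeightedHomogeneous (pw m n) d}

/-- The set of bihomogeneous elements of bidegree `d` in the free module `F = R^q`
(the generators of `F` sitting in bidegree `(0,0)`). -/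
def homF (K : Type*) [Field K] (m n q : ℕ) (d : ℤ × ℤ) :
    Set (Fin q → MvPolynomial (Fin (m + 1) ⊕ Fin (n + 1)) K) :=
  {x | ∀ i, (x i).IsWeightedHomogeneous (pw m n) d}


namespace Stmt4Aux
set_option linter.unusedSectionVars false
set_option linter.unusedVariables false


variable {K : Type*} [CommRing K] {σ : Type*} {M : Type*} [AddCommGroup M]

theorem whom_pow {w : σ → M} {a : MvPolynomial σ K} {da : M}
    (h : a.IsWeightedHomogeneous w da) (k : ℕ) :
    (a ^ k).IsWeightedHomogeneous w (k • da) := by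
  induction k with
  | zero => simpa using isWeightedHomogeneous_one K w
  | succ k ih =>
    rw [pow_succ, succ_nsmul]
    exact ih.mul h

theorem wcomp_mul {w : σ → M} {g : MvPolynomial σ K} {dg : M}
    (hg : g.IsWeightedHomogeneous w dg) (c : MvPolynomial σ K) (d : M) :
    weightedHomogeneousComponent w d (c * g) =
      weightedHomogeneousComponent w (d - dg) c * g := by
  classical
  apply MvPolynomial.ext
  intro μ
  rw [coeff_weightedHomogeneousComponent, coeff_mul, coeff_mul]
  split_ifs with h
  · refine Finset.sum_congr rfl fun x hx => ?_
    rw [coeff_weightedHomogeneousComponent]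
    by_cases hb : coeff x.2 g = 0
    · simp [hb]
    · have hw2 : Finsupp.weight w x.2 = dg := hg hb
      have hx' : x.1 + x.2 = μ := Finset.HasAntidiagonal.mem_antidiagonal.mp hx
      have hsum : Finsupp.weight w x.1 + Finsupp.weight w x.2 = Finsupp.weight w μ := by
        rw [← map_add, hx']
      rw [hw2] at hsum
      rw [if_pos (by rw [eq_sub_iff_add_eq, hsum, h])]
  · symm
    refine Finset.sum_eq_zero fun x hx => ?_
    rw [coeff_weightedHomogeneousComponent]
    by_cases hb : coeff x.2 g = 0
    · simp [hb]
    · rw [if_neg, zero_mul]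
      intro hc
      apply h
      have hx' : x.1 + x.2 = μ := Finset.HasAntidiagonal.mem_antidiagonal.mp hx
      have hw2 : Finsupp.weight w x.2 = dg := hg hb
      calc Finsupp.weight w μ = Finsupp.weight w x.1 + Finsupp.weight w x.2 := by
            rw [← hx', map_add]
        _ = (d - dg) + dg := by rw [hc, hw2]
        _ = d := by abel


variable {A : Type*} [CommRing A] {γ : Type*} [Fintype γ] [LinearOrder γ]

theorem kos_trans (f : γ → A) {t₁ t₂ : ℕ} (h : t₁ ≤ t₂) (ψ : Finset γ → A) (S : Finset γ) :
    kosD f t₂ (kosT f t₁ t₂ ψ) S = (∏ j ∈ S, f j ^ (t₂ - t₁)) * kosD f t₁ ψ S := by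
  unfold kosD kosT
  rw [Finset.mul_sum]
  refine Finset.sum_congr rfl fun j hj => ?_
  simp only [smul_eq_mul, zsmul_eq_mul]
  rw [← Finset.mul_prod_erase S _ hj]
  have hp : f j ^ t₂ = f j ^ (t₂ - t₁) * f j ^ t₁ := by
    rw [← pow_add, Nat.sub_add_cancel h]
  rw [hp]; ring

theorem kosT_comp (f : γ → A) {t t₁ t₂ : ℕ} (h1 : t ≤ t₁) (h2 : t₁ ≤ t₂)
    (φ : Finset γ → A) (S : Finset γ) :
    kosT f t t₂ φ S = (∏ j ∈ S, f j ^ (t₂ - t₁)) * kosT f t t₁ φ S := by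
  unfold kosT
  simp only [smul_eq_mul]
  rw [← mul_assoc, ← Finset.prod_mul_distrib]
  congr 1
  refine Finset.prod_congr rfl fun j _ => ?_
  rw [← pow_add]
  congr 1
  omega

theorem pair_erase_left {a b : γ} (hab : a ≠ b) : ({a, b} : Finset γ).erase a = {b} := by
  ext x; simp only [Finset.mem_erase, Finset.mem_insert, Finset.mem_singleton]
  constructor
  · rintro ⟨hx, h | h⟩ <;> [exact absurd h hx; exact h]
  · rintro rfl; exact ⟨fun h => hab h.symm, Or.inr rfl⟩

theorem pair_erase_right {a b : γ} (hab : a ≠ b) : ({a, b} : Finset γ).erase b = {a} := by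
  rw [Finset.pair_comm]; exact pair_erase_left hab.symm

theorem filter_pair_lt_left {a b : γ} (hab : a < b) :
    ({a, b} : Finset γ).filter (fun i => i < a) = ∅ := by
  ext x
  simp only [Finset.mem_filter, Finset.mem_insert, Finset.mem_singleton,
    Finset.notMem_empty, iff_false]
  rintro ⟨rfl | rfl, h⟩
  · exact lt_irrefl _ h
  · exact absurd (h.trans hab) (lt_irrefl _)

theorem filter_pair_lt_right {a b : γ} (hab : a < b) :
    ({a, b} : Finset γ).filter (fun i => i < b) = {a} := by
  ext x
  simp only [Finset.mem_filter, Finset.mem_insert, Finset.mem_singleton]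
  constructor
  · rintro ⟨rfl | rfl, h⟩
    · rfl
    · exact absurd h (lt_irrefl _)
  · rintro rfl; exact ⟨Or.inl rfl, hab⟩

theorem filter_singleton_lt {a : γ} : ({a} : Finset γ).filter (fun i => i < a) = ∅ := by
  rw [Finset.filter_singleton, if_neg (lt_irrefl a)]

-- kosD on a pair for a "product" cochain vanishes
theorem kosD_pair_aux (f : γ → A) (t : ℕ) (v : A) {a b : γ} (hab : a ≠ b) :
    kosD f t (fun S => (∏ j ∈ S, f j ^ t) * v) {a, b} = 0 := by
  wlog h : a < b generalizing a b
  · rw [Finset.pair_comm]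
    exact this hab.symm (hab.lt_or_gt.resolve_left h)
  unfold kosD
  rw [Finset.sum_pair hab, pair_erase_left hab, pair_erase_right hab,
    filter_pair_lt_left h, filter_pair_lt_right h]
  simp only [Finset.card_empty, Finset.card_singleton, pow_zero, pow_one, one_smul,
    neg_smul, one_smul, smul_eq_mul, Finset.prod_singleton]
  ring

theorem kosD_pair (f : γ → A) (t : ℕ) (v : A) (S : Finset γ) (hS : S.card = 2) :
    kosD f t (fun S => (∏ j ∈ S, f j ^ t) * v) S = 0 := by
  obtain ⟨a, b, hab, rfl⟩ := Finset.card_eq_two.mp hS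
  exact kosD_pair_aux f t v hab

-- kosD of singleton
theorem kosD_singleton (f : γ → A) (t : ℕ) (φ : Finset γ → A) (a : γ) :
    kosD f t φ {a} = f a ^ t * φ ∅ := by
  unfold kosD
  rw [Finset.sum_singleton, filter_singleton_lt, Finset.erase_singleton]
  simp



variable {K : Type*} [Field K] {m n : ℕ}

theorem irrGen_hom (j : Fin ((m + 1) * (n + 1))) :
    (irrGen K m n j).IsWeightedHomogeneous (pw m n) (1, 1) := by
  have h1 := isWeightedHomogeneous_X K (pw m n) (Sum.inl (finProdFinEquiv.symm j).1)
  have h2 := isWeightedHomogeneous_X K (pw m n) (Sum.inr (finProdFinEquiv.symm j).2)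
  have := h1.mul h2
  simpa [pw, Prod.ext_iff, irrGen] using this

theorem irrGen_ne_zero (j : Fin ((m + 1) * (n + 1))) : irrGen K m n j ≠ 0 :=
  mul_ne_zero (X_ne_zero _) (X_ne_zero _)

/-- Bihomogeneous implies homogeneous for total degree. -/
theorem hom_total {g : MvPolynomial (Fin (m + 1) ⊕ Fin (n + 1)) K} {d : ℤ × ℤ}
    (hg : g.IsWeightedHomogeneous (pw m n) d) :
    g.IsHomogeneous (d.1 + d.2).toNat := by
  intro μ hμ
  have hw : Finsupp.weight (pw m n) μ = d := hg hμ
  have key : ((Finsupp.weight 1 μ : ℕ) : ℤ) = d.1 + d.2 := by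
    rw [← hw]
    simp only [Finsupp.weight_apply, Finsupp.sum]
    rw [Prod.fst_sum, Prod.snd_sum, ← Finset.sum_add_distrib]
    push_cast
    refine Finset.sum_congr rfl fun i _ => ?_
    rcases i with a | b <;> simp [pw, Prod.smul_def, mul_comm]
  omega



section M0
variable {K : Type*} [Field K] {σ : Type*}

/-- The ideal generated by all the variables. -/
def M0 (K : Type*) [Field K] (σ : Type*) : Ideal (MvPolynomial σ K) :=
  Ideal.span (Set.range (X : σ → MvPolynomial σ K))

theorem mem_M0_iff {f : MvPolynomial σ K} : f ∈ M0 K σ ↔ constantCoeff f = 0 := by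
  classical
  rw [M0, ← Set.image_univ, mem_ideal_span_X_image]
  constructor
  · intro h
    by_contra hc
    obtain ⟨i, -, hi⟩ := h 0 (by rwa [mem_support_iff])
    simp at hi
  · intro h μ hμ
    have : μ ≠ 0 := by
      rintro rfl
      rw [mem_support_iff] at hμ
      exact hμ h
    obtain ⟨i, hi⟩ : ∃ i, μ i ≠ 0 := by
      by_contra hc
      push_neg at hc
      exact this (Finsupp.ext hc)
    exact ⟨i, Set.mem_univ i, hi⟩

theorem M0_eq_ker : M0 K σ = RingHom.ker (constantCoeff : MvPolynomial σ K →+* K) := by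
  ext f; rw [mem_M0_iff, RingHom.mem_ker]

theorem M0_isPrime : (M0 K σ).IsPrime := by
  rw [M0_eq_ker]; exact RingHom.ker_isPrime _

end M0

section Step0
variable {K : Type*} [Field K] {m n : ℕ}

theorem irrGen_mem_radical
    (I : Ideal (MvPolynomial (Fin (m + 1) ⊕ Fin (n + 1)) K))
    (ζ : Type*) (g : ζ → MvPolynomial (Fin (m + 1) ⊕ Fin (n + 1)) K)
    (hI : I = Ideal.span (Set.range g)) (r r' : ℕ)
    (hg : ∀ i, ∃ d : ℤ × ℤ, d ≤ ((r : ℤ), (r' : ℤ)) ∧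
      (g i).IsWeightedHomogeneous (pw m n) d)
    (hdim : ringKrullDim (MvPolynomial (Fin (m + 1) ⊕ Fin (n + 1)) K ⧸ I) = 0)
    (j : Fin ((m + 1) * (n + 1))) : irrGen K m n j ∈ I.radical := by
  classical
  letI : GradedAlgebra (homogeneousSubmodule (Fin (m + 1) ⊕ Fin (n + 1)) K) := MvPolynomial.gradedAlgebra
  by_contra hrad
  rw [Ideal.radical_eq_sInf, Ideal.mem_sInf] at hrad
  push_neg at hrad
  obtain ⟨P, ⟨hIP, hP⟩, hjP⟩ := hrad
  set Q : Ideal (MvPolynomial (Fin (m + 1) ⊕ Fin (n + 1)) K) := (P.homogeneousCore (homogeneousSubmodule (Fin (m + 1) ⊕ Fin (n + 1)) K)).toIdeal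
    with hQdef
  have hQP : Q ≤ P := Ideal.toIdeal_homogeneousCore_le _ _
  have hQprime : Q.IsPrime := hP.homogeneousCore
  have hIQ : I ≤ Q := by
    rw [hI, Ideal.span_le]
    rintro x ⟨i, rfl⟩
    obtain ⟨d, -, hd⟩ := hg i
    refine Ideal.mem_homogeneousCore_of_homogeneous_of_mem ⟨(d.1 + d.2).toNat, ?_⟩ ?_
    · rw [mem_homogeneousSubmodule]; exact hom_total hd
    · exact hIP (hI ▸ Ideal.subset_span ⟨i, rfl⟩)
  have hQM0 : Q ≤ M0 K (Fin (m + 1) ⊕ Fin (n + 1)) := by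
    rw [hQdef]
    show (P.homogeneousCore' _ : Ideal _) ≤ _
    rw [Ideal.homogeneousCore', Ideal.span_le]
    rintro x ⟨⟨y, hy⟩, hyP, rfl⟩
    by_cases hc : constantCoeff y = 0
    · exact mem_M0_iff.mpr hc
    · exfalso
      obtain ⟨N, hN⟩ := hy
      rw [mem_homogeneousSubmodule] at hN
      have hN0 : N = 0 := by
        have hc0 : coeff (0 : (Fin (m + 1) ⊕ Fin (n + 1)) →₀ ℕ) y ≠ 0 := by
          simpa [MvPolynomial.constantCoeff_eq] using hc
        have := hN hc0
        simpa using this.symm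
      -- y is a nonzero constant, so P = ⊤
      have hyC : y = C (constantCoeff y) := by
        apply MvPolynomial.ext
        intro ν
        rw [coeff_C]
        split_ifs with hν
        · subst hν; rfl
        · by_contra hcc
          have := hN hcc
          rw [hN0] at this
          have hν0 : ν = 0 := by
            have h1 : (Finsupp.weight (1 : (Fin (m + 1) ⊕ Fin (n + 1)) → ℕ)) ν = 0 := this
            rw [Finsupp.weight_apply] at h1
            simp only [Pi.one_apply, smul_eq_mul, mul_one] at h1
            have h2 : ∑ i ∈ ν.support, ν i = 0 := h1
            apply Finsupp.ext; intro i
            show ν i = 0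
            by_contra hi
            have hmem : i ∈ ν.support := Finsupp.mem_support_iff.mpr hi
            exact hi (Finset.sum_eq_zero_iff.mp h2 i hmem)
          exact hν (by rw [hν0])
      have : IsUnit y := by
        rw [hyC]; exact (isUnit_iff_ne_zero.mpr hc).map C
      exact hP.ne_top (Ideal.eq_top_of_isUnit_mem _ hyP this)
  have hjM0 : irrGen K m n j ∈ M0 K (Fin (m + 1) ⊕ Fin (n + 1)) := by
    exact Ideal.mul_mem_right _ _ (Ideal.subset_span ⟨_, rfl⟩)
  have hjQ : irrGen K m n j ∉ Q := fun h => hjP (hQP h)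
  have hQltM0 : Q < M0 K (Fin (m + 1) ⊕ Fin (n + 1)) := lt_of_le_of_ne hQM0 (fun h => hjQ (h ▸ hjM0))
  -- transfer to the quotient and contradict Krull dimension 0
  set π := Ideal.Quotient.mk I
  have hsurj : Function.Surjective π := Ideal.Quotient.mk_surjective
  have hker : RingHom.ker π = I := Ideal.mk_ker
  have hkerQ : RingHom.ker π ≤ Q := by rw [hker]; exact hIQ
  have hkerM0 : RingHom.ker π ≤ M0 K (Fin (m + 1) ⊕ Fin (n + 1)) := le_trans hkerQ hQM0
  haveI := hQprime
  haveI : (M0 K (Fin (m + 1) ⊕ Fin (n + 1))).IsPrime := M0_isPrime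
  have pQ : (Q.map π).IsPrime := Ideal.map_isPrime_of_surjective hsurj hkerQ
  have pM : ((M0 K (Fin (m + 1) ⊕ Fin (n + 1))).map π).IsPrime := Ideal.map_isPrime_of_surjective hsurj hkerM0
  have hlt : Q.map π < (M0 K (Fin (m + 1) ⊕ Fin (n + 1))).map π := by
    refine lt_of_le_of_ne (Ideal.map_mono hQltM0.le) fun hEq => ?_
    have h1 := congrArg (Ideal.comap π) hEq
    rw [Ideal.comap_map_of_surjective π hsurj, Ideal.comap_map_of_surjective π hsurj] at h1
    have hbot : Ideal.comap π ⊥ = RingHom.ker π := rfl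
    rw [hbot, sup_eq_left.mpr hkerQ, sup_eq_left.mpr hkerM0] at h1
    exact hQltM0.ne h1
  let a : PrimeSpectrum (MvPolynomial (Fin (m + 1) ⊕ Fin (n + 1)) K ⧸ I) := ⟨Q.map π, pQ⟩
  let b : PrimeSpectrum (MvPolynomial (Fin (m + 1) ⊕ Fin (n + 1)) K ⧸ I) := ⟨(M0 K (Fin (m + 1) ⊕ Fin (n + 1))).map π, pM⟩
  have hab : a < b := hlt
  let ch : LTSeries (PrimeSpectrum (MvPolynomial (Fin (m + 1) ⊕ Fin (n + 1)) K ⧸ I)) :=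
    (RelSeries.singleton _ a).snoc b hab
  have hlen := Order.LTSeries.length_le_krullDim ch
  have hch : ch.length = 1 := rfl
  rw [hch] at hlen
  rw [ringKrullDim] at hdim
  rw [hdim] at hlen
  norm_num at hlen

end Step0

section Steps
variable {K : Type*} [Field K] {m n : ℕ}

theorem stepA
    (I : Ideal (MvPolynomial (Fin (m + 1) ⊕ Fin (n + 1)) K))
    (p p' : ℤ)
    (hreg : IsBiregular (homR K m n) I (irrGen K m n) (irrW m n) p p')
    {t₀ : ℕ} (ht₀ : ∀ j, irrGen K m n j ^ t₀ ∈ I)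
    {d : ℤ × ℤ} (hd1 : p ≤ d.1) (hd2 : p' ≤ d.2)
    {v : MvPolynomial (Fin (m + 1) ⊕ Fin (n + 1)) K}
    (hv : v.IsWeightedHomogeneous (pw m n) d) : v ∈ I := by
  have hreg1 := hreg 1 d (by
    refine ⟨?_, ?_, ?_⟩ <;> push_cast <;> linarith)
  let f := irrGen K m n
  show v ∈ I
  have hco : IsKCochain (homR K m n) I (irrGen K m n) (irrW m n) d t₀ 1 (fun S => (∏ j ∈ S, irrGen K m n j ^ t₀) * v) := by
    intro S hS
    obtain ⟨a, rfl⟩ := Finset.card_eq_one.mp hS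
    constructor
    · show (∏ j ∈ ({a} : Finset _), irrGen K m n j ^ t₀) * v ∈ I
      rw [Finset.prod_singleton]
      exact Ideal.mul_mem_right _ _ (ht₀ a)
    · show ((∏ j ∈ ({a} : Finset _), irrGen K m n j ^ t₀) * v).IsWeightedHomogeneous (pw m n) _
      rw [Finset.prod_singleton]
      have hmul := (whom_pow (irrGen_hom a) t₀).mul hv
      have hdeq : d + t₀ • ∑ j ∈ ({a} : Finset _), irrW m n j
          = t₀ • ((1:ℤ), (1:ℤ)) + d := by
        rw [Finset.sum_singleton]
        show d + t₀ • ((1:ℤ),(1:ℤ)) = _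
        abel
      rw [hdeq]
      exact hmul
  have hcz : ∀ S : Finset (Fin ((m + 1) * (n + 1))), S.card = 1 + 1 →
      kosD (irrGen K m n) t₀ (fun S => (∏ j ∈ S, irrGen K m n j ^ t₀) * v) S = 0 := by
    intro S hS
    exact kosD_pair (irrGen K m n) t₀ v S hS
  obtain ⟨t', ht', ψ, hψ, heq⟩ := hreg1 t₀ _ hco hcz
  have hpos : 0 < (m + 1) * (n + 1) := Nat.mul_pos (Nat.succ_pos m) (Nat.succ_pos n)
  set j₀ : Fin ((m + 1) * (n + 1)) := ⟨0, hpos⟩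
  have h1 := heq {j₀} (Finset.card_singleton _)
  rw [kosD_singleton] at h1
  simp only [kosT, Finset.prod_singleton, smul_eq_mul] at h1
  have h2 : irrGen K m n j₀ ^ t' * v = irrGen K m n j₀ ^ t' * ψ ∅ := by
    rw [← h1, ← mul_assoc, ← pow_add, Nat.sub_add_cancel ht']
  have hv' : v = ψ ∅ := mul_left_cancel₀ (pow_ne_zero _ (irrGen_ne_zero j₀)) h2
  rw [hv']
  exact (hψ ∅ (by simp)).1

theorem stepB
    (I : Ideal (MvPolynomial (Fin (m + 1) ⊕ Fin (n + 1)) K))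
    (ζ : Type*) (g : ζ → MvPolynomial (Fin (m + 1) ⊕ Fin (n + 1)) K)
    (hI : I = Ideal.span (Set.range g)) (r r' : ℕ)
    (hg : ∀ i, ∃ d : ℤ × ℤ, d ≤ ((r : ℤ), (r' : ℤ)) ∧
      (g i).IsWeightedHomogeneous (pw m n) d)
    (p p' : ℤ)
    (hreg : IsBiregular (homR K m n) I (irrGen K m n) (irrW m n) p p')
    {t₀ : ℕ} (ht₀ : ∀ j, irrGen K m n j ^ t₀ ∈ I)
    (k : ℕ) :
    ∀ (v : MvPolynomial (Fin (m + 1) ⊕ Fin (n + 1)) K) (d : ℤ × ℤ),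
      v.IsWeightedHomogeneous (pw m n) d →
      (k : ℤ) * r + p ≤ d.1 → (k : ℤ) * r' + p' ≤ d.2 → v ∈ I ^ (k + 1) := by
  induction k with
  | zero =>
    intro v d hv h1 h2
    rw [pow_one]
    exact stepA I p p' hreg ht₀ (by push_cast at h1; linarith) (by push_cast at h2; linarith) hv
  | succ k ih =>
    intro v d hv h1 h2
    push_cast at h1 h2
    have hkr : (0:ℤ) ≤ ((k:ℤ) + 1) * r := by positivity
    have hkr' : (0:ℤ) ≤ ((k:ℤ) + 1) * r' := by positivity
    have hvI : v ∈ I := stepA I p p' hreg ht₀ (by linarith) (by linarith) hv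
    rw [hI] at hvI
    obtain ⟨c, hc⟩ := Finsupp.mem_ideal_span_range_iff_exists_finsupp.mp hvI
    have hvc : v = weightedHomogeneousComponent (pw m n) d v :=
      (hv.weightedHomogeneousComponent_same).symm
    rw [hvc, ← hc, Finsupp.sum, map_sum]
    apply Submodule.sum_mem
    intro i hi
    obtain ⟨dg, hdgle, hdg⟩ := hg i
    rw [wcomp_mul hdg]
    have hgI : g i ∈ I := hI ▸ Ideal.subset_span ⟨i, rfl⟩
    have hb1 : (k : ℤ) * r + p ≤ (d - dg).1 := by
      have hle1 := hdgle.1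
      have hsub : (d - dg).1 = d.1 - dg.1 := rfl
      rw [hsub]
      simp only at hle1
      linarith
    have hb2 : (k : ℤ) * r' + p' ≤ (d - dg).2 := by
      have hle2 := hdgle.2
      have hsub : (d - dg).2 = d.2 - dg.2 := rfl
      rw [hsub]
      simp only at hle2
      linarith
    have hcomp := ih (weightedHomogeneousComponent (pw m n) (d - dg) (c i)) (d - dg)
      (weightedHomogeneousComponent_isWeightedHomogeneous _ _) hb1 hb2
    have hmm := Ideal.mul_mem_mul hcomp hgI
    rwa [← pow_succ] at hmm

theorem sum_irrW {m n : ℕ} (S : Finset (Fin ((m + 1) * (n + 1)))) :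
    ∑ j ∈ S, irrW m n j = ((S.card : ℤ), (S.card : ℤ)) := by
  simp [irrW, Finset.sum_const, Prod.ext_iff]

end Steps

end Stmt4Aux

/-!
STATEMENT 4: Let `I ⊆ R` be generated by bihomogeneous forms of bidegree `≤ (r,r')`, and
assume `I` is `(p,p')`-regular and `dim R/I = 0`.  Then for every `e ≥ 1` the power `I^e`
is `((e−1)r + p, (e−1)r' + p')`-regular.
-/
set_option maxHeartbeats 2000000 in
open Stmt4Aux in
theorem stmt4 (K : Type*) [Field K] [Infinite K] (m n : ℕ) (hm : 1 ≤ m) (hn : 1 ≤ n)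
    (I : Ideal (MvPolynomial (Fin (m + 1) ⊕ Fin (n + 1)) K))
    (ζ : Type*) (g : ζ → MvPolynomial (Fin (m + 1) ⊕ Fin (n + 1)) K)
    (hI : I = Ideal.span (Set.range g)) (r r' : ℕ)
    (hg : ∀ i, ∃ d : ℤ × ℤ, d ≤ ((r : ℤ), (r' : ℤ)) ∧
      (g i).IsWeightedHomogeneous (pw m n) d)
    (p p' : ℤ)
    (hreg : IsBiregular (homR K m n) I (irrGen K m n) (irrW m n) p p')
    (hdim : ringKrullDim (MvPolynomial (Fin (m + 1) ⊕ Fin (n + 1)) K ⧸ I) = 0)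
    (e : ℕ) (he : 1 ≤ e) :
    IsBiregular (homR K m n) (I ^ e) (irrGen K m n) (irrW m n)
      (((e : ℤ) - 1) * r + p) (((e : ℤ) - 1) * r' + p') := by
  classical
  obtain ⟨k, rfl⟩ : ∃ k, e = k + 1 := ⟨e - 1, by omega⟩
  have hrad : ∀ j, irrGen K m n j ∈ I.radical := irrGen_mem_radical I ζ g hI r r' hg hdim
  have hradex : ∀ j, ∃ u : ℕ, irrGen K m n j ^ u ∈ I := fun j => hrad j
  choose nn hnn using hradex
  set t₀ := Finset.univ.sup nn with ht₀def
  have ht₀ : ∀ j, irrGen K m n j ^ t₀ ∈ I := by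
    intro j
    have hle : nn j ≤ t₀ := Finset.le_sup (Finset.mem_univ j)
    have hsplit : irrGen K m n j ^ t₀
        = irrGen K m n j ^ nn j * irrGen K m n j ^ (t₀ - nn j) := by
      rw [← pow_add, Nat.add_sub_cancel' hle]
    rw [hsplit]
    exact Ideal.mul_mem_right _ _ (hnn j)
  intro i d hd
  obtain ⟨hd1, hd2, hd3⟩ := hd
  have hkr : (0:ℤ) ≤ (k:ℤ) * r := by positivity
  have hkr' : (0:ℤ) ≤ (k:ℤ) * r' := by positivity
  obtain _ | i := i
  · -- i = 0
    intro t φ hφ hz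
    have hpos : 0 < (m + 1) * (n + 1) := Nat.mul_pos (Nat.succ_pos m) (Nat.succ_pos n)
    set j₀ : Fin ((m + 1) * (n + 1)) := ⟨0, hpos⟩
    have h0 : φ ∅ = 0 := by
      have h1 := hz {j₀} (by simp)
      rw [kosD_singleton] at h1
      exact (mul_eq_zero.mp h1).resolve_left (pow_ne_zero _ (irrGen_ne_zero j₀))
    refine ⟨t, le_rfl, fun _ => 0, fun S hS => ⟨Submodule.zero_mem _,
      isWeightedHomogeneous_zero K _ _⟩, fun S hS => ?_⟩
    rw [Finset.card_eq_zero] at hS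
    subst hS
    show kosT (irrGen K m n) t t φ ∅ = kosD (irrGen K m n) t (fun _ => 0) ∅
    simp [kosT, kosD, h0]
  · -- i + 1 ≥ 1
    intro t φ hφ hz
    have hIe_le : (I ^ (k + 1) : Ideal _) ≤ I := Ideal.pow_le_self (Nat.succ_ne_zero k)
    have hφ' : IsKCochain (homR K m n) I (irrGen K m n) (irrW m n) d t (i + 1) φ :=
      fun S hS => ⟨hIe_le (hφ S hS).1, (hφ S hS).2⟩
    have hdP : d ∈ RegSet ((↑(i + 1) : ℤ) - 1) p p' := by
      simp only [RegSet, Set.mem_setOf_eq] at hd1 hd2 hd3 ⊢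
      push_cast at hd1 hd2 hd3 ⊢
      refine ⟨by linarith, by linarith, by linarith⟩
    obtain ⟨t₁, ht₁, ψ, hψ, heq⟩ := hreg (i + 1) d hdP t φ hφ' hz
    obtain ⟨δ, hδ1, hδ2⟩ : ∃ δ : ℕ, ((k:ℤ) * r + p) - d.1 ≤ (δ:ℤ) ∧
        ((k:ℤ) * r' + p') - d.2 ≤ (δ:ℤ) := by
      refine ⟨(((k:ℤ) * r + p) - d.1).toNat + (((k:ℤ) * r' + p') - d.2).toNat, ?_, ?_⟩ <;>
        · push_cast
          omega
    obtain ⟨t₂, ht₁₂, htsub⟩ : ∃ t₂ : ℕ, t₁ ≤ t₂ ∧ t₂ - t₁ = δ :=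
      ⟨t₁ + δ, Nat.le_add_right _ _, by omega⟩
    refine ⟨t₂, le_trans ht₁ ht₁₂, kosT (irrGen K m n) t₁ t₂ ψ, ?_, ?_⟩
    · intro S hS
      have hSi : S.card = i := by omega
      obtain ⟨hmem, hhom⟩ := hψ S hS
      have hhomS : (ψ S).IsWeightedHomogeneous (pw m n) (d + t₁ • ((i:ℤ), (i:ℤ))) := by
        rwa [sum_irrW, hSi] at hhom
      have hprodhom : (∏ j ∈ S, irrGen K m n j ^ (t₂ - t₁)).IsWeightedHomogeneous (pw m n)
          (∑ _j ∈ S, (t₂ - t₁) • ((1:ℤ), (1:ℤ))) :=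
        IsWeightedHomogeneous.prod S _ _ fun j _ => whom_pow (irrGen_hom j) (t₂ - t₁)
      have hval : kosT (irrGen K m n) t₁ t₂ ψ S
          = (∏ j ∈ S, irrGen K m n j ^ (t₂ - t₁)) * ψ S := by
        simp [kosT, smul_eq_mul]
      have hmulhom := hprodhom.mul hhomS
      have hdeg : (∑ _j ∈ S, (t₂ - t₁) • ((1:ℤ), (1:ℤ))) + (d + t₁ • ((i:ℤ), (i:ℤ)))
          = d + t₂ • ((i:ℤ), (i:ℤ)) := by
        have h11 : ((1:ℤ),(1:ℤ)) = (1 : ℤ × ℤ) := rfl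
        have hii : ((i:ℤ),(i:ℤ)) = ((i : ℕ) : ℤ × ℤ) := by
          simp [Prod.ext_iff]
        rw [Finset.sum_const, hSi, h11, hii]
        simp only [nsmul_eq_mul, mul_one]
        rw [Nat.cast_sub ht₁₂]
        ring
      have hhomval : (kosT (irrGen K m n) t₁ t₂ ψ S).IsWeightedHomogeneous (pw m n)
          (d + t₂ • ((i:ℤ), (i:ℤ))) := by
        rw [hval, ← hdeg]
        exact hmulhom
      have hB1 : (k:ℤ) * r + p ≤ (d + t₂ • ((i:ℤ), (i:ℤ))).1 := by
        have h1 : (d + t₂ • ((i:ℤ), (i:ℤ))).1 = d.1 + (t₂:ℤ) * i := by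
          rw [Prod.fst_add, Prod.smul_fst, nsmul_eq_mul]
        rw [h1]
        rcases Nat.eq_zero_or_pos i with hi0 | hip
        · subst hi0
          push_cast at hd1 ⊢
          linarith
        · have h3 : (δ:ℤ) ≤ (t₂:ℤ) * i := by
            have h4 : (δ:ℤ) ≤ (t₂:ℤ) := by omega
            have h5 : (1:ℤ) ≤ (i:ℤ) := by exact_mod_cast hip
            nlinarith [Int.natCast_nonneg t₂]
          linarith
      have hB2 : (k:ℤ) * r' + p' ≤ (d + t₂ • ((i:ℤ), (i:ℤ))).2 := by
        have h1 : (d + t₂ • ((i:ℤ), (i:ℤ))).2 = d.2 + (t₂:ℤ) * i := by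
          rw [Prod.snd_add, Prod.smul_snd, nsmul_eq_mul]
        rw [h1]
        rcases Nat.eq_zero_or_pos i with hi0 | hip
        · subst hi0
          push_cast at hd2 ⊢
          linarith
        · have h3 : (δ:ℤ) ≤ (t₂:ℤ) * i := by
            have h4 : (δ:ℤ) ≤ (t₂:ℤ) := by omega
            have h5 : (1:ℤ) ≤ (i:ℤ) := by exact_mod_cast hip
            nlinarith [Int.natCast_nonneg t₂]
          linarith
      constructor
      · exact stepB I ζ g hI r r' hg p p' hreg ht₀ k _ _ hhomval hB1 hB2
      · rw [sum_irrW, hSi]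
        exact hhomval
    · intro S hS
      rw [kos_trans (irrGen K m n) ht₁₂ ψ S, ← heq S hS,
        kosT_comp (irrGen K m n) ht₁ ht₁₂ φ S]
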